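/- Let L, E, θ^n, H be as in the context and let f(x) = x^N − Σ_{k=1}^{N−1} e_k x^{N−k} − (1 + e_N). Then f has a unique positive real root φ; φ > 1, φ is a simple root, its modulus strictly exceeds that of every other complex root of f, and lim_{n→∞} H_n/φ^{n−1} = (1/f′(φ)) · Σ_{k=1}^{N} (H_k/(k−1)!) · g^{(k−1)}(0), where g is the polynomial g(x) = f(x)/(x − φ) and g^{(k−1)} denotes its (k−1)st derivative. -/

import Mathlib

open Filter Topology

namespace Zeck

-- A coefficient function is `μ : ℕ → ℕ`; index `0` is unused (members vanish there).

/-- The maximal L-block `θ^n` at index `n-1`, for `L = (e 1, …, e N)`. -/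
def maxBlock (N : ℕ) (e : ℕ → ℕ) (n : ℕ) : ℕ → ℕ :=
  fun k => if 1 ≤ k ∧ k < n then e ((n - k - 1) % N + 1) else 0

/-- A proper L-block at index `n-1` with support interval `[a, n-1]`. -/
def IsProperBlock (N : ℕ) (e : ℕ → ℕ) (ζ : ℕ → ℕ) (a n : ℕ) : Prop :=
  2 ≤ n ∧ 1 ≤ a ∧ a ≤ n - 1 ∧ (∀ j, a < j → ζ j = maxBlock N e n j) ∧
    ζ a < maxBlock N e n a ∧ (∀ j, j < a → ζ j = 0)

/-- An L-block (proper or maximal), together with its support interval. -/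
def IsBlock (N : ℕ) (e : ℕ → ℕ) (ζ : ℕ → ℕ) (I : Finset ℕ) : Prop :=
  ∃ n, 2 ≤ n ∧ ((ζ = maxBlock N e n ∧ I = Finset.Icc 1 (n - 1)) ∨
    (∃ a, IsProperBlock N e ζ a n ∧ I = Finset.Icc a (n - 1)))

/-- Membership in the periodic Zeckendorf collection for positive integers determined by L:
finite sums of L-blocks with pairwise disjoint support intervals (the zero function has `l = 0`). -/
def memColl (N : ℕ) (e : ℕ → ℕ) (μ : ℕ → ℕ) : Prop :=
  ∃ (l : ℕ) (ζ : ℕ → ℕ → ℕ) (I : ℕ → Finset ℕ),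
    (∀ i, i < l → IsBlock N e (ζ i) (I i)) ∧
    (∀ i j, i < l → j < l → i ≠ j → Disjoint (I i) (I j)) ∧
    ∀ k, μ k = ∑ i ∈ Finset.range l, ζ i k

/-- The maximal L*-block `β̄^n` at index `n`. -/
def maxStarBlock (N : ℕ) (e : ℕ → ℕ) (n : ℕ) : ℕ → ℕ :=
  fun k => if n ≤ k then e ((k - n) % N + 1) else 0

/-- A proper L*-block at index `n` with support interval `[n, b]`. -/
def IsProperStarBlock (N : ℕ) (e : ℕ → ℕ) (ζ : ℕ → ℕ) (n b : ℕ) : Prop :=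
  1 ≤ n ∧ n ≤ b ∧ (∀ j, j < b → ζ j = maxStarBlock N e n j) ∧
    ζ b < maxStarBlock N e n b ∧ (∀ j, b < j → ζ j = 0)

/-- Membership in the periodic Zeckendorf collection for `(0,1)` determined by L:
nonzero finite or infinite sums of proper L*-blocks with pairwise disjoint support intervals. -/
def memStar (N : ℕ) (e : ℕ → ℕ) (ε : ℕ → ℕ) : Prop :=
  ε ≠ 0 ∧ ∃ (l : ℕ∞) (ζ : ℕ → ℕ → ℕ) (nb : ℕ → ℕ × ℕ),
    (∀ i : ℕ, (i : ℕ∞) < l → IsProperStarBlock N e (ζ i) (nb i).1 (nb i).2) ∧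
    (∀ i j : ℕ, (i : ℕ∞) < l → (j : ℕ∞) < l → i ≠ j →
      Disjoint (Finset.Icc (nb i).1 (nb i).2) (Finset.Icc (nb j).1 (nb j).2)) ∧
    ∀ k, ε k = ∑' i : ℕ, if (i : ℕ∞) < l then ζ i k else 0

/-- A decomposition `ε = ζ^1 + … + ζ^l + μ` in which the `ζ^i` are proper L*-blocks whose
support intervals partition `[1, b]` and `μ` vanishes on `[0, b]` (`l, b` possibly infinite). -/
def DecompData (N : ℕ) (e : ℕ → ℕ) (ε : ℕ → ℕ) (l : ℕ∞) (ζ : ℕ → ℕ → ℕ)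
    (nb : ℕ → ℕ × ℕ) (b : ℕ∞) (μ : ℕ → ℕ) : Prop :=
  (∀ i : ℕ, (i : ℕ∞) < l → IsProperStarBlock N e (ζ i) (nb i).1 (nb i).2) ∧
  (∀ i j : ℕ, (i : ℕ∞) < l → (j : ℕ∞) < l → i ≠ j →
    Disjoint (Set.Icc (nb i).1 (nb i).2) (Set.Icc (nb j).1 (nb j).2)) ∧
  (⋃ i ∈ {i : ℕ | (i : ℕ∞) < l}, Set.Icc (nb i).1 (nb i).2) = {k : ℕ | 1 ≤ k ∧ (k : ℕ∞) ≤ b} ∧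
  (∀ k : ℕ, (k : ℕ∞) ≤ b → μ k = 0) ∧
  (∀ k, ε k = (∑' i : ℕ, if (i : ℕ∞) < l then ζ i k else 0) + μ k)

/-- Membership in `E̅*`. -/
def memEBar (N : ℕ) (e : ℕ → ℕ) (ε : ℕ → ℕ) : Prop :=
  memStar N e ε ∨
  ∃ (l : ℕ) (ζ : ℕ → ℕ → ℕ) (nb : ℕ → ℕ × ℕ) (b : ℕ),
    DecompData N e ε (l : ℕ∞) ζ nb (b : ℕ∞) (maxStarBlock N e (b + 1))

/-- Descending lexicographic order. -/
def dLT (a b : ℕ → ℕ) : Prop := ∃ k, a k < b k ∧ ∀ j, j < k → a j = b j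

def dLE (a b : ℕ → ℕ) : Prop := a = b ∨ dLT a b

/-- Ascending lexicographic order (on finitely supported functions). -/
def aLT (a b : ℕ → ℕ) : Prop := ∃ k, a k < b k ∧ ∀ j, k < j → a j = b j

/-- The basis coefficient function `β^b`. -/
def betaUnit (b : ℕ) : ℕ → ℕ := fun k => if k = b then 1 else 0

/-- The relation `η = rev̄(ε)`. -/
def RevBar (N : ℕ) (e : ℕ → ℕ) (ε η : ℕ → ℕ) : Prop :=
  (dLE (maxStarBlock N e 1) ε ∧ η = maxStarBlock N e 1) ∨
  (dLT ε (maxStarBlock N e 1) ∧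
    ((memStar N e ε ∧ η = ε) ∨
     ∃ (l : ℕ) (ζ : ℕ → ℕ → ℕ) (nb : ℕ → ℕ × ℕ) (b : ℕ) (μ : ℕ → ℕ),
       DecompData N e ε (l : ℕ∞) ζ nb (b : ℕ∞) μ ∧
       ((dLT (maxStarBlock N e (b + 1)) μ ∧
           η = fun k => (∑ i ∈ Finset.range l, ζ i k) + betaUnit b k) ∨
        (μ = maxStarBlock N e (b + 1) ∧ η = ε))))

/-- `Σ_k ε_k w^k` as a real number. -/
noncomputable def evalReal (ε : ℕ → ℕ) (w : ℝ) : ℝ := ∑' k : ℕ, (ε k : ℝ) * w ^ k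

/-- `Σ_k ε_k H_k` (finitely supported `ε`). -/
noncomputable def evalNat (ε H : ℕ → ℕ) : ℕ := ∑' k : ℕ, ε k * H k

/-- The counting function `z`. -/
noncomputable def zfun (N : ℕ) (e : ℕ → ℕ) (Ht : ℕ → ℕ) (x : ℕ) : ℕ :=
  Set.ncard {m : ℕ | m < x ∧ ∃ ε, memColl N e ε ∧ m = evalNat ε Ht}

/-- Characteristic polynomial of `L` for positive integers. -/
noncomputable def fchar (N : ℕ) (e : ℕ → ℕ) (x : ℝ) : ℝ :=
  x ^ N - (∑ k ∈ Finset.Ico 1 N, (e k : ℝ) * x ^ (N - k)) - (1 + (e N : ℝ))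

/-- Characteristic polynomial of `L` for `(0,1)`. -/
noncomputable def gchar (N : ℕ) (e : ℕ → ℕ) (x : ℝ) : ℝ :=
  -1 + (∑ k ∈ Finset.Ico 1 N, (e k : ℝ) * x ^ k) + (1 + (e N : ℝ)) * x ^ N

end Zeck

open Zeck Filter Polynomial


lemma aux_tendsto_zero {q : ℝ} (hq0 : 0 ≤ q) (hq1 : q < 1) {a u : ℕ → ℝ}
    (hu0 : ∀ n, 0 ≤ u n) (ha : Tendsto a atTop (nhds 0))
    (hrec : ∀ n, u (n+1) ≤ q * u n + a n) :
    Tendsto u atTop (nhds 0) := by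
  have h1q : 0 < 1 - q := by linarith
  rw [Metric.tendsto_atTop] at ha ⊢
  intro ε hε
  obtain ⟨K, hK⟩ := ha (ε * (1 - q) / 2) (by positivity)
  have claim : ∀ m, u (K + m) ≤ q ^ m * u K + ε / 2 := by
    intro m
    induction m with
    | zero => simp; linarith [hε]
    | succ m ih =>
      have haKm : a (K + m) ≤ ε * (1 - q) / 2 := by
        have := hK (K + m) (Nat.le_add_right _ _)
        rw [Real.dist_eq, sub_zero] at this
        exact (abs_le.1 this.le).2
      have h2 : u (K + (m + 1)) ≤ q * u (K + m) + a (K + m) := by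
        have := hrec (K + m); rwa [show K + (m+1) = (K + m) + 1 by ring]
      have h3 : q * u (K + m) ≤ q * (q ^ m * u K + ε / 2) :=
        mul_le_mul_of_nonneg_left ih hq0
      calc u (K + (m + 1)) ≤ q * (q ^ m * u K + ε / 2) + ε * (1 - q) / 2 := by linarith
        _ = q ^ (m + 1) * u K + (q * ε / 2 + ε * (1 - q) / 2) := by ring
        _ ≤ q ^ (m + 1) * u K + ε / 2 := by nlinarith
  have hpow : Tendsto (fun m : ℕ => q ^ m * u K) atTop (nhds 0) := by
    simpa using (tendsto_pow_atTop_nhds_zero_of_lt_one hq0 hq1).mul_const (u K)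
  rw [Metric.tendsto_atTop] at hpow
  obtain ⟨M, hM⟩ := hpow (ε / 2) (by positivity)
  refine ⟨K + M, fun n hn => ?_⟩
  obtain ⟨m, rfl⟩ : ∃ m, n = K + m := ⟨n - K, by omega⟩
  have hmM : M ≤ m := by omega
  have h4 : q ^ m * u K ≤ q ^ M * u K :=
    mul_le_mul_of_nonneg_right (pow_le_pow_of_le_one hq0 hq1.le hmM) (hu0 K)
  have h5 : q ^ M * u K < ε / 2 := by
    have := hM M le_rfl
    rw [Real.dist_eq, sub_zero] at this
    exact lt_of_abs_lt this
  rw [Real.dist_eq, sub_zero, abs_of_nonneg (hu0 _)]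
  have := claim m
  linarith
lemma aux_step {ρ : ℝ} (hρ : 0 < ρ) {z : ℂ} (hz : ‖z‖ < ρ) {r t : ℕ → ℂ}
    (hrt : ∀ n, r (n + 1) = z * r n + t n)
    (ht : Tendsto (fun n => ‖t n‖ / ρ ^ n) atTop (nhds 0)) :
    Tendsto (fun n => ‖r n‖ / ρ ^ n) atTop (nhds 0) := by
  have hq0 : (0:ℝ) ≤ ‖z‖ / ρ := by positivity
  have hq1 : ‖z‖ / ρ < 1 := (div_lt_one hρ).2 hz
  refine aux_tendsto_zero hq0 hq1 (fun n => by positivity)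
    (a := fun n => (‖t n‖ / ρ ^ n) / ρ) ?_ ?_
  · simpa using ht.div_const ρ
  · intro n
    have h1 : ‖r (n+1)‖ ≤ ‖z‖ * ‖r n‖ + ‖t n‖ := by
      rw [hrt n]
      calc ‖z * r n + t n‖ ≤ ‖z * r n‖ + ‖t n‖ := norm_add_le _ _
        _ = ‖z‖ * ‖r n‖ + ‖t n‖ := by rw [norm_mul]
    have hρn : (0:ℝ) < ρ ^ n := pow_pos hρ n
    rw [pow_succ]
    rw [div_le_iff₀ (by positivity)] at *
    calc ‖r (n+1)‖ ≤ ‖z‖ * ‖r n‖ + ‖t n‖ := h1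
      _ = (‖z‖ / ρ * (‖r n‖ / ρ ^ n) + ‖t n‖ / ρ ^ n / ρ) * (ρ ^ n * ρ) := by
          field_simp

lemma aux_shift_sum {K : Type*} [CommRing K] (h : K[X]) (d : ℕ) (hdeg : h.natDegree ≤ d)
    (z : K) (u : ℕ → K) (n : ℕ) :
    ∑ j ∈ Finset.range (d + 2), ((X - C z) * h).coeff j * u (n + j)
      = (∑ j ∈ Finset.range (d + 1), h.coeff j * u (n + 1 + j))
        - z * ∑ j ∈ Finset.range (d + 1), h.coeff j * u (n + j) := by
  have hcoeff1 : ∀ j, ((X - C z) * h).coeff (j + 1) = h.coeff j - h.coeff (j + 1) * z :=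
    fun j => by rw [mul_comm, coeff_mul_X_sub_C]
  have hcoeff0 : ((X - C z) * h).coeff 0 = -z * h.coeff 0 := by
    rw [mul_coeff_zero]; simp
  have htop : h.coeff (d + 1) = 0 :=
    coeff_eq_zero_of_natDegree_lt (by omega)
  rw [Finset.sum_range_succ' _ (d + 1), Finset.sum_range_succ' (fun j => h.coeff j * u (n + j)) d]
  simp only [hcoeff1, hcoeff0]
  simp only [sub_mul, Finset.sum_sub_distrib]
  rw [Finset.sum_range_succ (fun j => h.coeff (j + 1) * z * u (n + (j + 1)))]
  simp only [htop, zero_mul, add_zero, mul_add, Finset.mul_sum]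
  have : ∀ j, n + 1 + j = n + (j + 1) := fun j => by omega
  simp only [this]
  ring_nf
  have hs : ∑ x ∈ Finset.range d, h.coeff (x + 1) * z * u (n + (x + 1))
      = ∑ x ∈ Finset.range d, z * (h.coeff (x + 1) * u (n + (x + 1))) :=
    Finset.sum_congr rfl (fun x _ => by ring)
  congr 1; exact Finset.sum_congr rfl (fun x _ => by ring)
lemma aux_decay {ρ : ℝ} (hρ : 0 < ρ) :
    ∀ (d : ℕ) (g : Polynomial ℂ), g.Monic → g.natDegree = d →
      (∀ z : ℂ, g.IsRoot z → ‖z‖ < ρ) →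
      ∀ r : ℕ → ℂ, (∀ n, ∑ j ∈ Finset.range (d + 1), g.coeff j * r (n + j) = 0) →
      Tendsto (fun n => ‖r n‖ / ρ ^ n) atTop (nhds 0) := by
  intro d
  induction d with
  | zero =>
    intro g hg hdeg _ r hr
    have hc0 : g.coeff 0 = 1 := by
      have := hg.coeff_natDegree; rwa [hdeg] at this
    have hr0 : ∀ n, r n = 0 := by
      intro n
      have := hr n
      simpa [hc0] using this
    simp only [hr0]
    simpa using tendsto_const_nhds
  | succ d ih =>
    intro g hg hdeg hroots r hr
    have hdegpos : 0 < g.degree := by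
      rw [degree_eq_natDegree hg.ne_zero, hdeg]
      exact_mod_cast Nat.succ_pos d
    obtain ⟨z, hz⟩ := Complex.exists_root hdegpos
    set h := g /ₘ (X - C z) with hh
    have hfac : (X - C z) * h = g := (mul_divByMonic_eq_iff_isRoot).2 hz
    have hmonic : h.Monic := by
      have h2 : ((X - C z) * h).Monic := by rw [hfac]; exact hg
      exact (monic_X_sub_C z).of_mul_monic_left h2
    have hdegh : h.natDegree = d := by
      rw [hh, natDegree_divByMonic _ (monic_X_sub_C z), hdeg, natDegree_X_sub_C]; omega
    have hrootsh : ∀ w : ℂ, h.IsRoot w → ‖w‖ < ρ := by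
      intro w hw
      refine hroots w ?_
      rw [← hfac]
      simp [IsRoot, eval_mul, hw.eq_zero]
    set t : ℕ → ℂ := fun n => r (n + 1) - z * r n with htdef
    have hrec_t : ∀ n, ∑ j ∈ Finset.range (d + 1), h.coeff j * t (n + j) = 0 := by
      intro n
      have key := aux_shift_sum h d (le_of_eq hdegh) z r n
      rw [hfac] at key
      have h0 := hr n
      rw [show d + 1 + 1 = d + 2 by rfl] at h0
      rw [h0] at key
      have expand : ∑ j ∈ Finset.range (d + 1), h.coeff j * t (n + j)
          = (∑ j ∈ Finset.range (d + 1), h.coeff j * r (n + 1 + j))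
            - z * ∑ j ∈ Finset.range (d + 1), h.coeff j * r (n + j) := by
        simp only [htdef, mul_sub, Finset.sum_sub_distrib, Finset.mul_sum]
        congr 1
        · exact Finset.sum_congr rfl fun j _ => by rw [show n + j + 1 = n + 1 + j by omega]
        · exact Finset.sum_congr rfl fun j _ => by ring
      rw [expand]; exact key.symm
    have hdecay_t := ih h hmonic hdegh hrootsh t hrec_t
    exact aux_step hρ (hroots z hz) (fun n => by simp only [htdef]; ring) hdecay_t

section Pfacts
variable {N : ℕ} {e : ℕ → ℕ} {P : Polynomial ℝ}
  (hN : 2 ≤ N)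
  (hP : P = X ^ N - (∑ k ∈ Finset.Ico 1 N, C (e k : ℝ) * X ^ (N - k)) - C (1 + (e N : ℝ)))

include hP

lemma evalP' (x : ℝ) :
    P.eval x = x ^ N - (∑ k ∈ Finset.Ico 1 N, (e k : ℝ) * x ^ (N - k)) - (1 + (e N : ℝ)) := by
  subst hP
  simp [eval_finset_sum]

lemma evalPC' (z : ℂ) :
    (P.map (algebraMap ℝ ℂ)).eval z
      = z ^ N - (∑ k ∈ Finset.Ico 1 N, (e k : ℂ) * z ^ (N - k)) - (1 + (e N : ℂ)) := by
  subst hP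
  simp [Polynomial.map_sub, Polynomial.map_pow, Polynomial.map_sum, eval_finset_sum]

include hN

omit hP in
lemma degQlt : (∑ k ∈ Finset.Ico 1 N, C (e k : ℝ) * X ^ (N - k) + C (1 + (e N : ℝ))).degree
    < ((N : ℕ) : WithBot ℕ) := by
  have h1 : (∑ k ∈ Finset.Ico 1 N, C (e k : ℝ) * X ^ (N - k)).degree
      ≤ ((N - 1 : ℕ) : WithBot ℕ) := by
    refine (Polynomial.degree_sum_le _ _).trans ?_
    rw [Finset.sup_le_iff]
    intro k hk
    have hk' : 1 ≤ k ∧ k < N := by simpa using hk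
    have hle : (N - k : ℕ) ≤ N - 1 := by omega
    exact (degree_C_mul_X_pow_le _ _).trans (by exact_mod_cast hle)
  have h2 : (C (1 + (e N : ℝ))).degree ≤ ((N - 1 : ℕ) : WithBot ℕ) :=
    degree_C_le.trans (by exact_mod_cast Nat.zero_le (N - 1))
  have h3 : ((N - 1 : ℕ) : WithBot ℕ) < ((N : ℕ) : WithBot ℕ) := by
    exact_mod_cast (show N - 1 < N by omega)
  exact lt_of_le_of_lt ((degree_add_le _ _).trans (max_le h1 h2)) h3

lemma monicP : P.Monic := by
  subst hP
  rw [sub_sub]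
  exact monic_X_pow_sub (degQlt (e := e) hN)

lemma degP : P.degree = (N : WithBot ℕ) := by
  subst hP
  rw [sub_sub]
  rw [degree_sub_eq_left_of_degree_lt, degree_X_pow]
  rw [degree_X_pow]
  exact degQlt (e := e) hN
  
lemma natDegP : P.natDegree = N :=
  natDegree_eq_of_degree_eq_some (degP hN hP)

end Pfacts

section more
variable {N : ℕ} {e : ℕ → ℕ} {P : Polynomial ℝ}
  (hN : 2 ≤ N)
  (hP : P = X ^ N - (∑ k ∈ Finset.Ico 1 N, C (e k : ℝ) * X ^ (N - k)) - C (1 + (e N : ℝ)))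

include hP

lemma sumP (u : ℕ → ℝ) (n : ℕ) :
    ∑ j ∈ Finset.range (N + 1), P.coeff j * u (n + j)
      = u (n + N) - (∑ k ∈ Finset.Ico 1 N, (e k : ℝ) * u (n + (N - k)))
        - (1 + (e N : ℝ)) * u n := by
  subst hP
  have h1 : ∑ j ∈ Finset.range (N + 1), (X ^ N : Polynomial ℝ).coeff j * u (n + j)
      = u (n + N) := by
    rw [Finset.sum_eq_single N]
    · simp [coeff_X_pow]
    · intro b _ hb; simp [coeff_X_pow, Ne.symm hb, hb]
    · intro hmem; exact absurd (Finset.self_mem_range_succ N) hmem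
  have h2 : ∑ j ∈ Finset.range (N + 1), (C (1 + (e N : ℝ))).coeff j * u (n + j)
      = (1 + (e N : ℝ)) * u n := by
    rw [Finset.sum_eq_single 0]
    · simp
    · intro b _ hb; rw [coeff_C, if_neg hb, zero_mul]
    · intro hmem; exact absurd (Finset.mem_range.2 (by omega)) hmem
  have h3 : ∑ j ∈ Finset.range (N + 1),
        (∑ k ∈ Finset.Ico 1 N, C (e k : ℝ) * X ^ (N - k)).coeff j * u (n + j)
      = ∑ k ∈ Finset.Ico 1 N, (e k : ℝ) * u (n + (N - k)) := by
    simp only [finset_sum_coeff, coeff_C_mul, coeff_X_pow, Finset.sum_mul]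
    rw [Finset.sum_comm]
    refine Finset.sum_congr rfl fun k hk => ?_
    have hk' : 1 ≤ k ∧ k < N := by simpa using hk
    rw [Finset.sum_eq_single (N - k)]
    · simp
    · intro b _ hb; simp [Ne.symm hb, hb]
    · intro hmem; exact absurd (Finset.mem_range.2 (by omega)) hmem
  simp only [coeff_sub, sub_mul, Finset.sum_sub_distrib, h1, h2, h3]

lemma evalPderiv' (x : ℝ) :
    P.derivative.eval x
      = N * x ^ (N - 1)
        - ∑ k ∈ Finset.Ico 1 N, (e k : ℝ) * ((N - k : ℕ) : ℝ) * x ^ (N - k - 1) := by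
  subst hP
  simp [derivative_sub, derivative_X_pow, derivative_sum, derivative_C_mul_X_pow,
    eval_finset_sum, mul_assoc]

end more

lemma align1 {w : ℂ} {s : ℝ} (hs : 0 < s)
    (h : ‖w - s‖ ≤ |‖w‖ - s|) : w = (‖w‖ : ℂ) := by
  have e1 : ‖w - s‖ ^ 2 = ‖w‖ ^ 2 - 2 * s * w.re + s ^ 2 := by
    rw [Complex.sq_norm, Complex.normSq_apply]
    have : ‖w‖ ^ 2 = w.re ^ 2 + w.im ^ 2 := by
      rw [Complex.sq_norm, Complex.normSq_apply]; ring
    simp [Complex.sub_re, Complex.sub_im, Complex.ofReal_re, Complex.ofReal_im]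
    nlinarith [this]
  have e2 : |‖w‖ - s| ^ 2 = ‖w‖ ^ 2 - 2 * s * ‖w‖ + s ^ 2 := by
    rw [sq_abs]; ring
  have hsq : ‖w - s‖ ^ 2 ≤ |‖w‖ - s| ^ 2 :=
    pow_le_pow_left₀ (norm_nonneg _) h 2
  have hre : ‖w‖ ≤ w.re := by nlinarith
  have hre' : w.re ≤ ‖w‖ := Complex.re_le_norm w
  have hreq : w.re = ‖w‖ := le_antisymm hre' hre
  have him : w.im = 0 := by
    have h2 : ‖w‖ ^ 2 = w.re ^ 2 + w.im ^ 2 := by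
      rw [Complex.sq_norm, Complex.normSq_apply]; ring
    have him2 : w.im ^ 2 = 0 := by nlinarith
    exact pow_eq_zero_iff two_ne_zero |>.1 him2
  apply Complex.ext <;> simp [hreq, him]

section roots
variable {N : ℕ} {e : ℕ → ℕ} {P : Polynomial ℝ}

noncomputable def Ffun (N : ℕ) (e : ℕ → ℕ) (x : ℝ) : ℝ :=
  (∑ k ∈ Finset.Ico 1 N, (e k : ℝ) * (x⁻¹) ^ k) + (1 + (e N : ℝ)) * (x⁻¹) ^ N

variable (hN : 2 ≤ N) (he : 1 ≤ e 1)
  (hP : P = X ^ N - (∑ k ∈ Finset.Ico 1 N, C (e k : ℝ) * X ^ (N - k)) - C (1 + (e N : ℝ)))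


include hP in
lemma P_eq_F {x : ℝ} (hx : 0 < x) : P.eval x = x ^ N * (1 - Ffun N e x) := by
  rw [evalP' hP]
  have hxk : ∀ k : ℕ, k ≤ N → x ^ N * (x⁻¹) ^ k = x ^ (N - k) := by
    intro k hk
    rw [inv_pow, ← div_eq_mul_inv, div_eq_iff (by positivity)]
    rw [← pow_add]
    congr 1
    omega
  rw [Ffun, mul_sub, mul_one, mul_add, Finset.mul_sum]
  have hsum : ∑ i ∈ Finset.Ico 1 N, x ^ N * ((e i : ℝ) * x⁻¹ ^ i)
      = ∑ i ∈ Finset.Ico 1 N, (e i : ℝ) * x ^ (N - i) := by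
    refine Finset.sum_congr rfl fun i hi => ?_
    have hi' : i ≤ N := by simp at hi; omega
    rw [mul_left_comm, hxk i hi']
  have hlast : x ^ N * ((1 + (e N : ℝ)) * x⁻¹ ^ N) = 1 + (e N : ℝ) := by
    rw [mul_left_comm, hxk N le_rfl]
    simp
  rw [hsum, hlast]
  ring

omit hP in
include hN in
lemma F_anti {x y : ℝ} (hx : 0 < x) (hxy : x < y) : Ffun N e y < Ffun N e x := by
  have hy : 0 < y := lt_trans hx hxy
  have hinv : y⁻¹ < x⁻¹ := by
    exact inv_strictAnti₀ hx hxy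
  have hinv0 : 0 < y⁻¹ := inv_pos.2 hy
  have h1 : ∑ k ∈ Finset.Ico 1 N, (e k : ℝ) * (y⁻¹) ^ k
      ≤ ∑ k ∈ Finset.Ico 1 N, (e k : ℝ) * (x⁻¹) ^ k := by
    refine Finset.sum_le_sum fun k _ => ?_
    exact mul_le_mul_of_nonneg_left
      (pow_le_pow_left₀ hinv0.le hinv.le k) (Nat.cast_nonneg _)
  have h2 : (1 + (e N : ℝ)) * (y⁻¹) ^ N < (1 + (e N : ℝ)) * (x⁻¹) ^ N := by
    have hNpos : N ≠ 0 := by omega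
    refine mul_lt_mul_of_pos_left (pow_lt_pow_left₀ hinv hinv0.le hNpos) ?_
    positivity
  exact add_lt_add_of_le_of_lt h1 h2

end roots

section roots2
variable {N : ℕ} {e : ℕ → ℕ} {P : Polynomial ℝ}
  (hN : 2 ≤ N) (he : 1 ≤ e 1)
  (hP : P = X ^ N - (∑ k ∈ Finset.Ico 1 N, C (e k : ℝ) * X ^ (N - k)) - C (1 + (e N : ℝ)))

include hN he hP

lemma P_one_neg : P.eval 1 < 0 := by
  rw [evalP' hP]
  have h1 : (e 1 : ℝ) ≤ ∑ k ∈ Finset.Ico 1 N, (e k : ℝ) :=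
    Finset.single_le_sum (f := fun k => (e k : ℝ)) (fun k _ => Nat.cast_nonneg (e k))
      (Finset.mem_Ico.2 ⟨le_rfl, by omega⟩)
  have he' : (1 : ℝ) ≤ (e 1 : ℝ) := by exact_mod_cast he
  have hsum : ∑ k ∈ Finset.Ico 1 N, (e k : ℝ) * (1:ℝ) ^ (N - k)
      = ∑ k ∈ Finset.Ico 1 N, (e k : ℝ) := by simp
  rw [one_pow, hsum]
  have : (0:ℝ) ≤ (e N : ℝ) := Nat.cast_nonneg _
  linarith

lemma P_big_pos : 0 < P.eval (1 + (∑ k ∈ Finset.Ico 1 N, (e k : ℝ)) + (1 + (e N : ℝ))) := by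
  set S : ℝ := (∑ k ∈ Finset.Ico 1 N, (e k : ℝ)) + (1 + (e N : ℝ)) with hS
  have hS0 : 0 ≤ S := by
    have : (0:ℝ) ≤ ∑ k ∈ Finset.Ico 1 N, (e k : ℝ) :=
      Finset.sum_nonneg fun k _ => Nat.cast_nonneg _
    have : (0:ℝ) ≤ (e N : ℝ) := Nat.cast_nonneg _
    simp only [hS]; linarith
  set M : ℝ := 1 + S with hM
  have hM1 : 1 ≤ M := by simp only [hM]; linarith
  have hM0 : 0 < M := by linarith
  rw [evalP' hP, show 1 + (∑ k ∈ Finset.Ico 1 N, (e k : ℝ)) + (1 + (e N : ℝ)) = M by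
    simp only [hM, hS]; ring]
  have hterm : ∀ k ∈ Finset.Ico 1 N, (e k : ℝ) * M ^ (N - k) ≤ (e k : ℝ) * M ^ (N - 1) := by
    intro k hk
    have hk' : 1 ≤ k ∧ k < N := by simpa using hk
    exact mul_le_mul_of_nonneg_left
      (pow_le_pow_right₀ hM1 (by omega)) (Nat.cast_nonneg _)
  have h1 : ∑ k ∈ Finset.Ico 1 N, (e k : ℝ) * M ^ (N - k)
      ≤ (∑ k ∈ Finset.Ico 1 N, (e k : ℝ)) * M ^ (N - 1) := by
    rw [Finset.sum_mul]
    exact Finset.sum_le_sum hterm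
  have h2 : (1 + (e N : ℝ)) ≤ (1 + (e N : ℝ)) * M ^ (N - 1) := by
    nth_rewrite 1 [← mul_one (1 + (e N : ℝ))]
    refine mul_le_mul_of_nonneg_left (one_le_pow₀ hM1) (by positivity)
  have h3 : M ^ N = M * M ^ (N - 1) := by
    rw [← pow_succ']
    congr 1
    omega
  have h4 : (0:ℝ) < M ^ (N - 1) := pow_pos hM0 _
  have key : S * M ^ (N-1) + 1 * M ^ (N-1) = M * M ^ (N-1) := by
    rw [hM]; ring
  nlinarith [h1, h2, h3, h4]

end roots2

section roots3
variable {N : ℕ} {e : ℕ → ℕ} {P : Polynomial ℝ}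
  (hN : 2 ≤ N) (he : 1 ≤ e 1)
  (hP : P = X ^ N - (∑ k ∈ Finset.Ico 1 N, C (e k : ℝ) * X ^ (N - k)) - C (1 + (e N : ℝ)))

include hN he hP

lemma F_at_root {φ : ℝ} (hφ : 0 < φ) (hroot : P.eval φ = 0) : Ffun N e φ = 1 := by
  have h := P_eq_F hP hφ
  rw [hroot] at h
  have hφN : φ ^ N ≠ 0 := pow_ne_zero _ hφ.ne'
  have := (mul_eq_zero.1 h.symm).resolve_left hφN
  linarith [this]

lemma root_gt_one_and_unique :
    ∃ φ : ℝ, 1 < φ ∧ P.eval φ = 0 ∧ ∀ y : ℝ, 0 < y → P.eval y = 0 → y = φ := by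
  set M : ℝ := 1 + ((∑ k ∈ Finset.Ico 1 N, (e k : ℝ)) + (1 + (e N : ℝ))) with hM
  have hM1 : (1:ℝ) ≤ M := by
    have h1 : (0:ℝ) ≤ ∑ k ∈ Finset.Ico 1 N, (e k : ℝ) :=
      Finset.sum_nonneg fun k _ => Nat.cast_nonneg _
    have h2 : (0:ℝ) ≤ (e N : ℝ) := Nat.cast_nonneg _
    simp only [hM]; linarith
  have hcont : ContinuousOn (fun x => P.eval x) (Set.Icc 1 M) :=
    (Polynomial.continuous P).continuousOn
  have hmem : (0:ℝ) ∈ Set.Icc (P.eval 1) (P.eval M) := by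
    constructor
    · exact (P_one_neg hN he hP).le
    · have := P_big_pos hN he hP
      rw [show 1 + (∑ k ∈ Finset.Ico 1 N, (e k : ℝ)) + (1 + (e N : ℝ)) = M by
        simp only [hM]; ring] at this
      exact this.le
  obtain ⟨φ, hφmem, hφroot⟩ := intermediate_value_Icc hM1 hcont hmem
  have hφ1 : 1 < φ := by
    rcases lt_or_eq_of_le hφmem.1 with h | h
    · exact h
    · exfalso
      rw [← h] at hφroot
      simp only at hφroot
      linarith [P_one_neg hN he hP, hφroot]
  have hφpos : 0 < φ := by linarith
  refine ⟨φ, hφ1, hφroot, fun y hy hyr => ?_⟩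
  have hFy := F_at_root hN he hP hy hyr
  have hFφ := F_at_root hN he hP hφpos hφroot
  rcases lt_trichotomy y φ with h | h | h
  · exfalso
    have := F_anti (e := e) hN hy h
    rw [hFy, hFφ] at this; exact lt_irrefl 1 this
  · exact h
  · exfalso
    have := F_anti (e := e) hN hφpos h
    rw [hFy, hFφ] at this; exact lt_irrefl 1 this

lemma P_pos_of_gt {φ s : ℝ} (hφ : 0 < φ) (hroot : P.eval φ = 0) (hs : φ < s) :
    0 < P.eval s := by
  have hs0 : 0 < s := lt_trans hφ hs
  have hFφ := F_at_root hN he hP hφ hroot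
  have hF := F_anti (e := e) hN hφ hs
  rw [hFφ] at hF
  rw [P_eq_F hP hs0]
  have : 0 < 1 - Ffun N e s := by linarith
  positivity

end roots3

section roots4
variable {N : ℕ} {e : ℕ → ℕ} {P : Polynomial ℝ}
  (hN : 2 ≤ N) (he : 1 ≤ e 1)
  (hP : P = X ^ N - (∑ k ∈ Finset.Ico 1 N, C (e k : ℝ) * X ^ (N - k)) - C (1 + (e N : ℝ)))


include hN he hP

lemma rooteq {φ : ℝ} (hroot : P.eval φ = 0) :
    φ ^ N = (∑ k ∈ Finset.Ico 1 N, (e k : ℝ) * φ ^ (N - k)) + (1 + (e N : ℝ)) := by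
  have := evalP' hP φ
  rw [hroot] at this
  linarith

lemma derivPos {φ : ℝ} (hφ : 0 < φ) (hroot : P.eval φ = 0) :
    0 < P.derivative.eval φ := by
  have hre := rooteq hN he hP hroot
  have h1 : φ * P.derivative.eval φ
      = (N : ℝ) * φ ^ N - ∑ k ∈ Finset.Ico 1 N, (e k : ℝ) * ((N - k : ℕ) : ℝ) * φ ^ (N - k) := by
    rw [evalPderiv' hP, mul_sub, Finset.mul_sum]
    congr 1
    · rw [show φ * ((N:ℝ) * φ ^ (N-1)) = (N:ℝ) * (φ * φ ^ (N-1)) by ring, ← pow_succ']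
      congr 2
      omega
    · refine Finset.sum_congr rfl fun k hk => ?_
      have hk' : 1 ≤ k ∧ k < N := by simpa using hk
      rw [show φ * ((e k:ℝ) * ((N-k:ℕ):ℝ) * φ ^ (N-k-1))
        = (e k:ℝ) * ((N-k:ℕ):ℝ) * (φ * φ ^ (N-k-1)) by ring, ← pow_succ']
      congr 2
      omega
  have h2 : (N:ℝ) * φ ^ N
      = (∑ k ∈ Finset.Ico 1 N, (N:ℝ) * ((e k : ℝ) * φ ^ (N - k))) + (N:ℝ) * (1 + (e N : ℝ)) := by
    rw [hre, mul_add, Finset.mul_sum]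
  have h3 : φ * P.derivative.eval φ
      = (∑ k ∈ Finset.Ico 1 N, (e k : ℝ) * (k : ℝ) * φ ^ (N - k)) + (N:ℝ) * (1 + (e N : ℝ)) := by
    rw [h1, h2]
    rw [add_sub_right_comm, ← Finset.sum_sub_distrib]
    congr 1
    refine Finset.sum_congr rfl fun k hk => ?_
    have hk' : 1 ≤ k ∧ k < N := by simpa using hk
    have hcast : ((N - k : ℕ) : ℝ) = (N : ℝ) - (k : ℝ) := by
      rw [Nat.cast_sub (by omega)]
    rw [hcast]
    ring
  have h4 : 0 < φ * P.derivative.eval φ := by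
    rw [h3]
    have hs : 0 ≤ ∑ k ∈ Finset.Ico 1 N, (e k : ℝ) * (k : ℝ) * φ ^ (N - k) :=
      Finset.sum_nonneg fun k _ => by positivity
    have hN' : (0:ℝ) < N := by exact_mod_cast (by omega : 0 < N)
    nlinarith [(Nat.cast_nonneg (e N) : (0:ℝ) ≤ (e N : ℝ))]
  by_contra hcon
  push_neg at hcon
  nlinarith [h4]

end roots4

section roots5
variable {N : ℕ} {e : ℕ → ℕ} {P : Polynomial ℝ}
  (hN : 2 ≤ N) (he : 1 ≤ e 1)
  (hP : P = X ^ N - (∑ k ∈ Finset.Ico 1 N, C (e k : ℝ) * X ^ (N - k)) - C (1 + (e N : ℝ)))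


include hN he hP

lemma dominance {φ : ℝ} (hφ1 : 1 < φ) (hroot : P.eval φ = 0) (z : ℂ)
    (hz : (P.map (algebraMap ℝ ℂ)).eval z = 0) (hne : z ≠ (φ : ℂ)) :
    ‖z‖ < φ := by
  have hφ : (0:ℝ) < φ := by linarith
  have hre := rooteq hN he hP hroot
  have hrootC : z ^ N = (∑ k ∈ Finset.Ico 1 N, (e k : ℂ) * z ^ (N - k)) + (1 + (e N : ℂ)) := by
    have := evalPC' hP z
    rw [hz] at this
    have h0 : (0:ℂ) = z ^ N - (∑ k ∈ Finset.Ico 1 N, (e k : ℂ) * z ^ (N - k)) - (1 + (e N : ℂ)) := this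
    linear_combination -h0
  set s : ℝ := ‖z‖ with hs
  have habs_sum : ∀ (t : ℝ), ‖z‖ ≤ t → 0 ≤ t →
      ‖∑ k ∈ Finset.Ico 1 N, (e k : ℂ) * z ^ (N - k)‖
        ≤ ∑ k ∈ Finset.Ico 1 N, (e k : ℝ) * t ^ (N - k) := by
    intro t hzt ht0
    refine (norm_sum_le _ _).trans ?_
    refine Finset.sum_le_sum fun k _ => ?_
    rw [norm_mul, norm_pow, Complex.norm_natCast]
    exact mul_le_mul_of_nonneg_left (pow_le_pow_left₀ (norm_nonneg z) hzt _)
      (Nat.cast_nonneg _)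
  -- first: s ≤ φ
  have hsφ : s ≤ φ := by
    by_contra hcon
    push_neg at hcon
    have hPs : 0 < P.eval s := P_pos_of_gt hN he hP hφ hroot hcon
    have h1 : s ^ N ≤ (∑ k ∈ Finset.Ico 1 N, (e k : ℝ) * s ^ (N - k)) + (1 + (e N : ℝ)) := by
      have h2 : ‖z ^ N‖ = s ^ N := by rw [norm_pow]
      rw [← h2, hrootC]
      refine (norm_add_le _ _).trans ?_
      gcongr
      · exact habs_sum s le_rfl (norm_nonneg z)
      · calc ‖1 + (e N : ℂ)‖ ≤ ‖1‖ + ‖(e N : ℂ)‖ :=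
            norm_add_le _ _
          _ = 1 + (e N : ℝ) := by rw [norm_one, Complex.norm_natCast]
    have := evalP' hP s
    nlinarith [hPs]
  rcases lt_or_eq_of_le hsφ with h | hseq
  · exact h
  -- now s = φ; derive contradiction
  exfalso
  have hc : (0:ℝ) < 1 + (e N : ℝ) := by positivity
  have habszN : ‖z ^ N‖ = φ ^ N := by rw [norm_pow, ← hs, hseq]
  -- z^N is real positive
  have hzN : z ^ N = ((φ ^ N : ℝ) : ℂ) := by
    have h1 : ‖z ^ N - ((1 + (e N : ℝ) : ℝ) : ℂ)‖
        ≤ |‖z ^ N‖ - (1 + (e N : ℝ))| := by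
      have h2 : z ^ N - ((1 + (e N : ℝ) : ℝ) : ℂ)
          = ∑ k ∈ Finset.Ico 1 N, (e k : ℂ) * z ^ (N - k) := by
        rw [hrootC]; push_cast; ring
      rw [h2]
      have h3 := habs_sum φ (by rw [← hs, hseq]) (by linarith)
      have h4 : ∑ k ∈ Finset.Ico 1 N, (e k : ℝ) * φ ^ (N - k) = φ ^ N - (1 + (e N : ℝ)) := by
        linarith [hre]
      rw [h4] at h3
      rw [habszN]
      exact h3.trans (le_abs_self _)
    have := align1 hc h1
    rw [habszN] at this
    exact this
  -- sB
  set sB : ℝ := φ ^ N - (1 + (e N : ℝ)) with hsB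
  have hsB_eq : sB = ∑ k ∈ Finset.Ico 1 N, (e k : ℝ) * φ ^ (N - k) := by
    rw [hsB]; linarith [hre]
  have hsB_pos : 0 < sB := by
    rw [hsB_eq]
    have h1 : (e 1 : ℝ) * φ ^ (N - 1) ≤ ∑ k ∈ Finset.Ico 1 N, (e k : ℝ) * φ ^ (N - k) :=
      Finset.single_le_sum (f := fun k => (e k : ℝ) * φ ^ (N - k))
        (fun k _ => by positivity) (Finset.mem_Ico.2 ⟨le_rfl, by omega⟩)
    have he' : (1:ℝ) ≤ (e 1 : ℝ) := by exact_mod_cast he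
    nlinarith [pow_pos hφ (N - 1)]
  -- split sums
  have hsplitC : ∑ k ∈ Finset.Ico 1 N, (e k : ℂ) * z ^ (N - k)
      = (e 1 : ℂ) * z ^ (N - 1) + ∑ k ∈ Finset.Ico 2 N, (e k : ℂ) * z ^ (N - k) := by
    rw [Finset.sum_eq_sum_Ico_succ_bot (by omega : 1 < N)]
  have hsplitR : ∑ k ∈ Finset.Ico 1 N, (e k : ℝ) * φ ^ (N - k)
      = (e 1 : ℝ) * φ ^ (N - 1) + ∑ k ∈ Finset.Ico 2 N, (e k : ℝ) * φ ^ (N - k) := by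
    rw [Finset.sum_eq_sum_Ico_succ_bot (by omega : 1 < N)]
  set w : ℂ := (e 1 : ℂ) * z ^ (N - 1) with hw
  have habsw : ‖w‖ = (e 1 : ℝ) * φ ^ (N - 1) := by
    rw [hw, norm_mul, norm_pow, Complex.norm_natCast, ← hs, hseq]
  have htail : ‖∑ k ∈ Finset.Ico 2 N, (e k : ℂ) * z ^ (N - k)‖
      ≤ ∑ k ∈ Finset.Ico 2 N, (e k : ℝ) * φ ^ (N - k) := by
    refine (norm_sum_le _ _).trans ?_
    refine Finset.sum_le_sum fun k _ => ?_
    rw [norm_mul, norm_pow, Complex.norm_natCast, ← hs, hseq]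
  have hw_sub : w - ((sB : ℝ) : ℂ) = -(∑ k ∈ Finset.Ico 2 N, (e k : ℂ) * z ^ (N - k)) := by
    have h1 : w + ∑ k ∈ Finset.Ico 2 N, (e k : ℂ) * z ^ (N - k) = ((sB : ℝ) : ℂ) := by
      rw [← hsplitC]
      have h2 : ∑ k ∈ Finset.Ico 1 N, (e k : ℂ) * z ^ (N - k) = z ^ N - (1 + (e N : ℂ)) := by
        linear_combination -hrootC
      rw [h2, hzN, hsB]
      push_cast
      ring
    linear_combination h1
  have halign : ‖w - ((sB : ℝ) : ℂ)‖ ≤ |‖w‖ - sB| := by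
    rw [hw_sub, norm_neg]
    have h2 : ∑ k ∈ Finset.Ico 2 N, (e k : ℝ) * φ ^ (N - k) = sB - ‖w‖ := by
      rw [habsw, hsB_eq, hsplitR]; ring
    rw [abs_sub_comm]
    exact (htail.trans (le_of_eq h2)).trans (le_abs_self _)
  have hwreal := align1 hsB_pos halign
  rw [habsw] at hwreal
  -- z ^ (N-1) real
  have he0 : (e 1 : ℂ) ≠ 0 := by
    simp only [Ne, Nat.cast_eq_zero]
    omega
  have hzN1 : z ^ (N - 1) = ((φ ^ (N - 1) : ℝ) : ℂ) := by
    have : (e 1 : ℂ) * z ^ (N - 1) = (e 1 : ℂ) * ((φ ^ (N - 1) : ℝ) : ℂ) := by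
      rw [← hw, hwreal]; push_cast; ring
    exact mul_left_cancel₀ he0 this
  -- conclude z = φ
  apply hne
  have hpow : z * z ^ (N - 1) = z ^ N := by
    rw [← pow_succ']
    congr 1
    omega
  have hφpow : (φ : ℂ) * ((φ ^ (N - 1) : ℝ) : ℂ) = ((φ ^ N : ℝ) : ℂ) := by
    have hr : φ * φ ^ (N - 1) = φ ^ N := by
      rw [← pow_succ']
      congr 1
      omega
    calc (φ : ℂ) * ((φ ^ (N - 1) : ℝ) : ℂ) = (((φ * φ ^ (N - 1)) : ℝ) : ℂ) := by push_cast; ring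
      _ = ((φ ^ N : ℝ) : ℂ) := by rw [hr]
  have hfin : z * ((φ ^ (N - 1) : ℝ) : ℂ) = (φ : ℂ) * ((φ ^ (N - 1) : ℝ) : ℂ) := by
    rw [hφpow, ← hzN, ← hzN1]
    exact hpow
  have hφN1ne : ((φ ^ (N - 1) : ℝ) : ℂ) ≠ 0 := by
    simp only [Ne, Complex.ofReal_eq_zero]
    positivity
  exact mul_right_cancel₀ hφN1ne hfin

end roots5
lemma Hrec' {N : ℕ} {e : ℕ → ℕ} {H : ℕ → ℕ} (hN : 2 ≤ N) (hH1 : H 1 = 1)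
    (hHrec : ∀ n, 2 ≤ n → H n = 1 + ∑ k ∈ Finset.Ico 1 n, Zeck.maxBlock N e n k * H k) :
    ∀ n, N + 1 ≤ n →
      H n = (∑ k ∈ Finset.Ico 1 N, e k * H (n - k)) + (1 + e N) * H (n - N) := by
  intro n hn
  have h2 : 2 ≤ n := by omega
  have hmain := hHrec n h2
  have hsplit : ∑ k ∈ Finset.Ico 1 (n - N), Zeck.maxBlock N e n k * H k
      + ∑ k ∈ Finset.Ico (n - N) n, Zeck.maxBlock N e n k * H k
      = ∑ k ∈ Finset.Ico 1 n, Zeck.maxBlock N e n k * H k :=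
    Finset.sum_Ico_consecutive _ (by omega) (by omega)
  have hlow : 1 + ∑ k ∈ Finset.Ico 1 (n - N), Zeck.maxBlock N e n k * H k = H (n - N) := by
    have hcongr : ∀ k ∈ Finset.Ico 1 (n - N), Zeck.maxBlock N e n k * H k
        = Zeck.maxBlock N e (n - N) k * H k := by
      intro k hk
      have hk' : 1 ≤ k ∧ k < n - N := by simpa using hk
      congr 1
      unfold Zeck.maxBlock
      rw [if_pos ⟨hk'.1, by omega⟩, if_pos ⟨hk'.1, by omega⟩]
      congr 2
      rw [show n - k - 1 = (n - N - k - 1) + N by omega, Nat.add_mod_right]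
    rw [Finset.sum_congr rfl hcongr]
    rcases Nat.lt_or_ge (n - N) 2 with h | h
    · have h1 : n - N = 1 := by omega
      rw [h1]
      simp [hH1]
    · rw [← hHrec (n - N) h]
  have hhigh : ∑ k ∈ Finset.Ico (n - N) n, Zeck.maxBlock N e n k * H k
      = ∑ j ∈ Finset.Ico 1 (N + 1), e j * H (n - j) := by
    refine Finset.sum_nbij' (fun k => n - k) (fun j => n - j) ?_ ?_ ?_ ?_ ?_
    · intro k hk
      have hk' : n - N ≤ k ∧ k < n := by simpa using hk
      simp only [Finset.mem_Ico]
      omega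
    · intro j hj
      have hj' : 1 ≤ j ∧ j < N + 1 := by simpa using hj
      simp only [Finset.mem_Ico]
      omega
    · intro k hk
      have hk' : n - N ≤ k ∧ k < n := by simpa using hk
      show n - (n - k) = k
      omega
    · intro j hj
      have hj' : 1 ≤ j ∧ j < N + 1 := by simpa using hj
      show n - (n - j) = j
      omega
    · intro k hk
      have hk' : n - N ≤ k ∧ k < n := by simpa using hk
      show Zeck.maxBlock N e n k * H k = e (n - k) * H (n - (n - k))
      have h1 : n - (n - k) = k := by omega
      rw [h1]
      congr 1
      unfold Zeck.maxBlock
      rw [if_pos ⟨by omega, hk'.2⟩]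
      congr 1
      rw [Nat.mod_eq_of_lt (by omega)]
      omega
  rw [hhigh] at hsplit
  rw [hmain, ← hsplit, ← Nat.add_assoc, hlow,
    Finset.sum_Ico_succ_top (by omega : 1 ≤ N)]
  ring

/-- The characteristic polynomial of `L` has a unique positive real root `φ`; it is `> 1`,
simple, strictly dominates the modulus of all other complex roots, and
`H_n/φ^(n-1)` tends to `(1/f'(φ)) Σ_{k=1}^N (H_k/(k-1)!) g^{(k-1)}(0)` where `g = f/(x-φ)`. -/
theorem fundamental_sequence_binet (N : ℕ) (e : ℕ → ℕ) (hN : 2 ≤ N) (he : 1 ≤ e 1)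
    (H : ℕ → ℕ) (hH1 : H 1 = 1)
    (hHrec : ∀ n, 2 ≤ n → H n = 1 + ∑ k ∈ Finset.Ico 1 n, maxBlock N e n k * H k)
    (P : Polynomial ℝ)
    (hP : P = X ^ N - (∑ k ∈ Finset.Ico 1 N, C (e k : ℝ) * X ^ (N - k))
      - C (1 + (e N : ℝ))) :
    (∃! x : ℝ, 0 < x ∧ P.eval x = 0) ∧
    ∀ φ : ℝ, 0 < φ → P.eval φ = 0 →
      1 < φ ∧ P.rootMultiplicity φ = 1 ∧
      (∀ z : ℂ, (P.map (algebraMap ℝ ℂ)).eval z = 0 → z ≠ (φ : ℂ) → ‖z‖ < φ) ∧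
      Filter.Tendsto (fun n : ℕ => (H n : ℝ) / φ ^ (n - 1)) Filter.atTop
        (nhds ((1 / P.derivative.eval φ) *
          ∑ k ∈ Finset.Icc 1 N, (H k : ℝ) / (Nat.factorial (k - 1) : ℝ) *
            ((fun q : Polynomial ℝ => Polynomial.derivative q)^[k - 1]
              (P /ₘ (X - C φ))).eval 0)) := by
  obtain ⟨φ₀, hφ₀1, hφ₀root, hφ₀uniq⟩ := root_gt_one_and_unique hN he hP
  constructor
  · exact ⟨φ₀, ⟨by linarith, hφ₀root⟩, fun y hy => hφ₀uniq y hy.1 hy.2⟩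
  intro φ hφpos hφroot
  have hφ1 : 1 < φ := (hφ₀uniq φ hφpos hφroot) ▸ hφ₀1
  have hne0 : P ≠ 0 := (monicP hN hP).ne_zero
  have hD : 0 < P.derivative.eval φ := derivPos hN he hP hφpos hφroot
  refine ⟨hφ1, ?_, fun z hz hzne => dominance hN he hP hφ1 hφroot z hz hzne, ?_⟩
  · -- root multiplicity
    have h1 : 0 < P.rootMultiplicity φ := (rootMultiplicity_pos hne0).2 hφroot
    have h2 : ¬ 1 < P.rootMultiplicity φ := by
      intro hcon
      have := ((one_lt_rootMultiplicity_iff_isRoot hne0).1 hcon).2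
      rw [IsRoot] at this
      linarith
    omega
  -- the limit
  set g : Polynomial ℝ := P /ₘ (X - C φ) with hg
  have hfac : (X - C φ) * g = P := mul_divByMonic_eq_iff_isRoot.2 hφroot
  have hgmonic : g.Monic := by
    have h2 : ((X - C φ) * g).Monic := by rw [hfac]; exact monicP hN hP
    exact (monic_X_sub_C φ).of_mul_monic_left h2
  have hgdeg : g.natDegree = N - 1 := by
    rw [hg, natDegree_divByMonic _ (monic_X_sub_C φ), natDegP hN hP, natDegree_X_sub_C]
  have hgφ : g.eval φ = P.derivative.eval φ := by
    have hder : P.derivative = g + (X - C φ) * g.derivative := by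
      conv_lhs => rw [← hfac]
      rw [derivative_mul, derivative_X_sub_C, one_mul]
    rw [hder]
    simp
  set D : ℝ := P.derivative.eval φ with hDdef
  set A : ℝ := ∑ j ∈ Finset.range N, g.coeff j * (H (j + 1) : ℝ) with hA
  set c : ℝ := A / D with hc
  set R : ℕ → ℝ := fun m => (H (m + 1) : ℝ) - c * φ ^ m with hR
  have hre := rooteq hN he hP hφroot
  -- recurrence for H in real form
  have hHsum : ∀ n : ℕ, ∑ j ∈ Finset.range (N + 1), P.coeff j * (H (n + j + 1) : ℝ) = 0 := by
    intro n
    have hs := sumP hP (fun m => (H (m + 1) : ℝ)) n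
    have hrec := Hrec' hN hH1 hHrec (n + N + 1) (by omega)
    have hcast : (H (n + N + 1) : ℝ)
        = (∑ k ∈ Finset.Ico 1 N, (e k : ℝ) * (H (n + N + 1 - k) : ℝ))
          + (1 + (e N : ℝ)) * (H (n + 1) : ℝ) := by
      rw [show n + N + 1 - N = n + 1 by omega] at hrec
      exact_mod_cast congrArg (Nat.cast : ℕ → ℝ) hrec
    have hidx : ∀ k ∈ Finset.Ico 1 N, (e k : ℝ) * (H (n + N + 1 - k) : ℝ)
        = (e k : ℝ) * (H (n + (N - k) + 1) : ℝ) := by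
      intro k hk
      have hk' : 1 ≤ k ∧ k < N := by simpa using hk
      congr 3
      omega
    rw [Finset.sum_congr rfl hidx] at hcast
    rw [hs, hcast]
    ring
  have hφsum : ∀ n : ℕ, ∑ j ∈ Finset.range (N + 1), P.coeff j * φ ^ (n + j) = 0 := by
    intro n
    have hs := sumP hP (fun m => φ ^ m) n
    rw [hs]
    have h1 : φ ^ (n + N) = φ ^ n * φ ^ N := pow_add φ n N
    have h2 : ∀ k ∈ Finset.Ico 1 N, (e k : ℝ) * φ ^ (n + (N - k))
        = φ ^ n * ((e k : ℝ) * φ ^ (N - k)) := by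
      intro k _
      rw [pow_add]
      ring
    rw [h1, Finset.sum_congr rfl h2, ← Finset.mul_sum]
    nlinarith [hre, pow_pos (by linarith : (0:ℝ) < φ) n]
  have hRsum : ∀ n : ℕ, ∑ j ∈ Finset.range (N + 1), P.coeff j * R (n + j) = 0 := by
    intro n
    have he1 : ∑ j ∈ Finset.range (N + 1), P.coeff j * R (n + j)
        = (∑ j ∈ Finset.range (N + 1), P.coeff j * (H (n + j + 1) : ℝ))
          - c * ∑ j ∈ Finset.range (N + 1), P.coeff j * φ ^ (n + j) := by
      simp only [hR, mul_sub, Finset.sum_sub_distrib, Finset.mul_sum]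
      congr 1
      exact Finset.sum_congr rfl fun j _ => by ring
    rw [he1, hHsum n, hφsum n]
    ring
  -- the S sequence
  set S : ℕ → ℝ := fun n => ∑ j ∈ Finset.range N, g.coeff j * R (n + j) with hS
  have hN2 : N - 1 + 1 = N := by omega
  have hN1 : N - 1 + 2 = N + 1 := by omega
  have hSrec : ∀ n, S (n + 1) = φ * S n := by
    intro n
    have hsh := aux_shift_sum g (N - 1) hgdeg.le φ R n
    rw [hfac, hN1, hN2] at hsh
    rw [hRsum n] at hsh
    have h1 : S (n + 1) = ∑ j ∈ Finset.range N, g.coeff j * R (n + 1 + j) := rfl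
    have h2 : S n = ∑ j ∈ Finset.range N, g.coeff j * R (n + j) := rfl
    rw [h1, h2]
    linarith [hsh]
  have hgevalsum : ∑ j ∈ Finset.range N, g.coeff j * φ ^ j = D := by
    have := eval_eq_sum_range (p := g) φ
    rw [hgdeg, hN2] at this
    rw [← this, hgφ]
  have hS0 : S 0 = 0 := by
    have h1 : S 0 = A - c * ∑ j ∈ Finset.range N, g.coeff j * φ ^ j := by
      simp only [hS, hR, hA, mul_sub, Finset.sum_sub_distrib, Finset.mul_sum, zero_add]
      congr 1
      exact Finset.sum_congr rfl fun j _ => by ring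
    rw [h1, hgevalsum, hc]
    field_simp
    ring
  have hSzero : ∀ n, S n = 0 := by
    intro n
    induction n with
    | zero => exact hS0
    | succ m ih => rw [hSrec m, ih, mul_zero]
  -- complexify
  set gc : Polynomial ℂ := g.map (algebraMap ℝ ℂ) with hgc
  have hgcmonic : gc.Monic := hgmonic.map _
  have hgcdeg : gc.natDegree = N - 1 := by
    rw [hgc, hgmonic.natDegree_map, hgdeg]
  have hφC : (0:ℝ) < φ := by linarith
  have hgcroots : ∀ z : ℂ, gc.IsRoot z → ‖z‖ < φ := by
    intro z hzroot
    have hPz : (P.map (algebraMap ℝ ℂ)).eval z = 0 := by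
      rw [← hfac, Polynomial.map_mul, eval_mul, hzroot.eq_zero, mul_zero]
    have hzneφ : z ≠ (φ : ℂ) := by
      intro hzeq
      rw [hzeq] at hzroot
      have : gc.eval ((φ : ℝ) : ℂ) = ((g.eval φ : ℝ) : ℂ) := by
        rw [hgc, eval_map]
        exact eval₂_at_apply (algebraMap ℝ ℂ) φ
      rw [IsRoot, this, hgφ] at hzroot
      have : (D : ℝ) = 0 := by exact_mod_cast hzroot
      linarith
    exact dominance hN he hP hφ1 hφroot z hPz hzneφ
  set Rc : ℕ → ℂ := fun n => ((R n : ℝ) : ℂ) with hRc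
  have hgcR : ∀ n : ℕ, ∑ j ∈ Finset.range (N - 1 + 1), gc.coeff j * Rc (n + j) = 0 := by
    intro n
    rw [hN2]
    have hco : ∀ j, gc.coeff j = ((g.coeff j : ℝ) : ℂ) := fun j => coeff_map _ j
    have : ∑ j ∈ Finset.range N, gc.coeff j * Rc (n + j)
        = ((∑ j ∈ Finset.range N, g.coeff j * R (n + j) : ℝ) : ℂ) := by
      rw [Complex.ofReal_sum]
      exact Finset.sum_congr rfl fun j _ => by rw [hco j, hRc, Complex.ofReal_mul]
    have h0 : ∑ j ∈ Finset.range N, g.coeff j * R (n + j) = 0 := hSzero n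
    rw [this, h0, Complex.ofReal_zero]
  have hdec := aux_decay hφC (N - 1) gc hgcmonic hgcdeg hgcroots Rc hgcR
  have hRdec : Tendsto (fun n : ℕ => R n / φ ^ n) atTop (nhds 0) := by
    rw [tendsto_zero_iff_norm_tendsto_zero]
    have hnorm : ∀ n : ℕ, ‖R n / φ ^ n‖ = ‖Rc n‖ / φ ^ n := by
      intro n
      rw [norm_div, hRc]
      simp only [Complex.norm_real]
      congr 1
      rw [Real.norm_eq_abs, abs_of_pos (pow_pos hφC n)]
    simp only [hnorm]
    exact hdec
  have hHlim : Tendsto (fun n : ℕ => (H (n + 1) : ℝ) / φ ^ n) atTop (nhds c) := by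
    have heq : ∀ n : ℕ, (H (n + 1) : ℝ) / φ ^ n = R n / φ ^ n + c := by
      intro n
      have hp : φ ^ n ≠ 0 := (pow_pos hφC n).ne'
      field_simp [hR]
      simp only [hR]; ring
    simp only [heq]
    simpa using hRdec.add_const c
  -- identify the limit constant
  have hLc : (1 / D) *
      ∑ k ∈ Finset.Icc 1 N, (H k : ℝ) / (Nat.factorial (k - 1) : ℝ) *
        ((fun q : Polynomial ℝ => Polynomial.derivative q)^[k - 1] g).eval 0 = c := by
    have hiter : ∀ k ∈ Finset.Icc 1 N,
        (H k : ℝ) / (Nat.factorial (k - 1) : ℝ) *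
          ((fun q : Polynomial ℝ => Polynomial.derivative q)^[k - 1] g).eval 0
        = (H k : ℝ) * g.coeff (k - 1) := by
      intro k hk
      have hfun : (fun q : Polynomial ℝ => Polynomial.derivative q) = ⇑(derivative (R := ℝ)) := rfl
      rw [hfun, ← coeff_zero_eq_eval_zero, coeff_iterate_derivative]
      rw [zero_add, Nat.descFactorial_self, nsmul_eq_mul]
      have hfne : ((Nat.factorial (k - 1) : ℕ) : ℝ) ≠ 0 := by
        exact_mod_cast (Nat.factorial_ne_zero (k - 1))
      field_simp
    rw [Finset.sum_congr rfl hiter]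
    have hreindex : ∑ k ∈ Finset.Icc 1 N, (H k : ℝ) * g.coeff (k - 1) = A := by
      rw [hA]
      refine Finset.sum_nbij' (fun k => k - 1) (fun j => j + 1) ?_ ?_ ?_ ?_ ?_
      · intro k hk
        have hk' : 1 ≤ k ∧ k ≤ N := by simpa using hk
        simp only [Finset.mem_range]
        omega
      · intro j hj
        have hj' : j < N := by simpa using hj
        simp only [Finset.mem_Icc]
        omega
      · intro k hk
        have hk' : 1 ≤ k ∧ k ≤ N := by simpa using hk
        show k - 1 + 1 = k
        omega
      · intro j hj
        show j + 1 - 1 = j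
        omega
      · intro k hk
        have hk' : 1 ≤ k ∧ k ≤ N := by simpa using hk
        show (H k : ℝ) * g.coeff (k - 1) = g.coeff (k - 1) * (H (k - 1 + 1) : ℝ)
        rw [show k - 1 + 1 = k by omega]
        ring
    rw [hreindex, hc]
    field_simp
  rw [hLc]
  -- final index shift
  have hcomp : Tendsto (fun n : ℕ => (H ((n - 1) + 1) : ℝ) / φ ^ (n - 1)) atTop (nhds c) :=
    hHlim.comp (tendsto_sub_atTop_nat 1)
  refine hcomp.congr' ?_
  filter_upwards [eventually_ge_atTop 1] with n hn
  rw [show n - 1 + 1 = n from by omega]
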